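/- Let N ≥ 2 be an integer, let γ > 0, ρ > 0 be reals, and let δ be a real with 0 < δ < √2·N·√((N−1)/(3N+1)). For λ > 0 set d(λ) = √(γλ)·δ, R(λ) = ρ² + (8γN² − 4d(λ)ρ(3N+1))/(λ(N+1)²) − 4d(λ)²(3N+1)/(λ²(N−1)(N+1)²), and a(λ) = (d(λ)(6N+2) − λ(N+1)²(ρ − √(R(λ))))/(4N²). Then R(λ) > 0 for all sufficiently small λ > 0, and lim_{λ→0⁺} a(λ)/√(γλ) = D̄(N,δ)·(N+1)²/(2N²) + (3N+1)δ/(2N²). -/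
import Mathlib


open Filter

/-- `d(λ) = √(γλ)·δ`. -/
noncomputable def dCoef (γ δ lam : ℝ) : ℝ := Real.sqrt (γ * lam) * δ

/-- The discriminant `R(λ)` appearing in the explicit formula for `a(λ)`. -/
noncomputable def RCoef (N : ℕ) (γ ρ δ lam : ℝ) : ℝ :=
  ρ ^ 2 + (8 * γ * (N : ℝ) ^ 2 - 4 * dCoef γ δ lam * ρ * (3 * (N : ℝ) + 1))
      / (lam * ((N : ℝ) + 1) ^ 2)
    - 4 * (dCoef γ δ lam) ^ 2 * (3 * (N : ℝ) + 1)
      / (lam ^ 2 * ((N : ℝ) - 1) * ((N : ℝ) + 1) ^ 2)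

/-- The coefficient `a(λ)`. -/
noncomputable def aCoef (N : ℕ) (γ ρ δ lam : ℝ) : ℝ :=
  (dCoef γ δ lam * (6 * (N : ℝ) + 2)
      - lam * ((N : ℝ) + 1) ^ 2 * (ρ - Real.sqrt (RCoef N γ ρ δ lam)))
    / (4 * (N : ℝ) ^ 2)

/-- `D̄(N,y) = √((2N³ − 2N² − (3N+1)y²)/((N−1)(N+1)²))`. -/
noncomputable def Dbar (N : ℕ) (y : ℝ) : ℝ :=
  Real.sqrt ((2 * (N : ℝ) ^ 3 - 2 * (N : ℝ) ^ 2 - (3 * (N : ℝ) + 1) * y ^ 2)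
    / (((N : ℝ) - 1) * ((N : ℝ) + 1) ^ 2))

lemma key_aux (N : ℕ) (hN : 2 ≤ N) (γ ρ δ lam : ℝ) (hγ : 0 < γ) (hl : 0 < lam) :
    lam * RCoef N γ ρ δ lam =
      ρ^2*lam + 4*γ*((2*(N:ℝ)^3 - 2*(N:ℝ)^2 - (3*(N:ℝ)+1)*δ^2)
          / (((N:ℝ)-1)*((N:ℝ)+1)^2))
        - (4*δ*ρ*(3*(N:ℝ)+1)/((N:ℝ)+1)^2) * Real.sqrt (γ*lam) := by
  have hn2 : (2:ℝ) ≤ (N:ℝ) := by exact_mod_cast hN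
  obtain ⟨a, ha0, rfl⟩ : ∃ a : ℝ, 0 < a ∧ a^2 = γ :=
    ⟨Real.sqrt γ, Real.sqrt_pos.mpr hγ, Real.sq_sqrt hγ.le⟩
  obtain ⟨b, hb0, rfl⟩ : ∃ b : ℝ, 0 < b ∧ b^2 = lam :=
    ⟨Real.sqrt lam, Real.sqrt_pos.mpr hl, Real.sq_sqrt hl.le⟩
  have hs : Real.sqrt (a^2 * b^2) = a * b := by
    rw [show a^2*b^2 = (a*b)^2 by ring, Real.sqrt_sq (by positivity)]
  simp only [RCoef, dCoef, hs]
  have h1 : (0:ℝ) < (N:ℝ) - 1 := by linarith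
  have h2 : (0:ℝ) < (N:ℝ) + 1 := by linarith
  field_simp
  ring

/-- For small `λ > 0` the discriminant `R(λ)` is positive and
`a(λ)/√(γλ) → D̄(N,δ)·(N+1)²/(2N²) + (3N+1)δ/(2N²)` as `λ → 0⁺`. -/
theorem a_coef_asymptotics
    (N : ℕ) (hN : 2 ≤ N) (γ ρ : ℝ) (hγ : 0 < γ) (hρ : 0 < ρ)
    (δ : ℝ) (hδ0 : 0 < δ)
    (hδ : δ < Real.sqrt 2 * (N : ℝ) * Real.sqrt (((N : ℝ) - 1) / (3 * (N : ℝ) + 1))) :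
    (∀ᶠ lam in nhdsWithin (0 : ℝ) (Set.Ioi 0), 0 < RCoef N γ ρ δ lam) ∧
    Tendsto (fun lam : ℝ => aCoef N γ ρ δ lam / Real.sqrt (γ * lam))
      (nhdsWithin (0 : ℝ) (Set.Ioi 0))
      (nhds (Dbar N δ * ((N : ℝ) + 1) ^ 2 / (2 * (N : ℝ) ^ 2)
        + (3 * (N : ℝ) + 1) * δ / (2 * (N : ℝ) ^ 2))) := by
  have hn2 : (2:ℝ) ≤ (N:ℝ) := by exact_mod_cast hN
  set n : ℝ := (N:ℝ) with hn
  have hn0 : 0 < n := by linarith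
  have hn1 : 0 < n - 1 := by linarith
  have hnp : 0 < n + 1 := by linarith
  have h3n : 0 < 3*n+1 := by linarith
  have hr : (0:ℝ) ≤ (n-1)/(3*n+1) := by positivity
  -- numerator positivity
  have hδ2 : (3*n+1) * δ^2 < 2*n^2*(n-1) := by
    have hpos : 0 < Real.sqrt 2 * n * Real.sqrt ((n-1)/(3*n+1)) := lt_trans hδ0 hδ
    have h1 : δ^2 < (Real.sqrt 2 * n * Real.sqrt ((n-1)/(3*n+1)))^2 :=
      sq_lt_sq' (by linarith) hδ
    have h2 : (Real.sqrt 2 * n * Real.sqrt ((n-1)/(3*n+1)))^2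
        = 2 * n^2 * ((n-1)/(3*n+1)) := by
      rw [mul_pow, mul_pow, Real.sq_sqrt (by norm_num : (0:ℝ) ≤ 2), Real.sq_sqrt hr]
    rw [h2] at h1
    have h3 := mul_lt_mul_of_pos_right h1 h3n
    have h4 : 2 * n ^ 2 * ((n - 1) / (3 * n + 1)) * (3 * n + 1) = 2*n^2*(n-1) := by
      field_simp
    rw [h4] at h3
    linarith
  set X : ℝ := (2*n^3 - 2*n^2 - (3*n+1)*δ^2) / ((n-1)*(n+1)^2) with hX
  have hXpos : 0 < X := div_pos (by nlinarith) (by positivity)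
  have hDbar : Dbar N δ = Real.sqrt X := rfl
  set g : ℝ → ℝ := fun lam =>
    ρ^2*lam + 4*γ*X - (4*δ*ρ*(3*n+1)/(n+1)^2) * Real.sqrt (γ*lam) with hg
  have key : ∀ lam : ℝ, 0 < lam → lam * RCoef N γ ρ δ lam = g lam := fun lam hl =>
    key_aux N hN γ ρ δ lam hγ hl
  -- tendsto of g
  have hsq0 : Tendsto (fun lam : ℝ => Real.sqrt (γ*lam)) (nhds 0) (nhds 0) := by
    have : Continuous (fun lam : ℝ => Real.sqrt (γ*lam)) :=
      Real.continuous_sqrt.comp (continuous_const.mul continuous_id)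
    simpa using this.tendsto 0
  have hgt : Tendsto g (nhdsWithin (0:ℝ) (Set.Ioi 0)) (nhds (4*γ*X)) := by
    have h : Tendsto g (nhds 0)
        (nhds (ρ^2*0 + 4*γ*X - (4*δ*ρ*(3*n+1)/(n+1)^2) * 0)) :=
      ((tendsto_const_nhds.mul tendsto_id).add tendsto_const_nhds).sub
        (tendsto_const_nhds.mul hsq0)
    simpa using h.mono_left nhdsWithin_le_nhds
  have hgpos : ∀ᶠ lam in nhdsWithin (0:ℝ) (Set.Ioi 0), 0 < g lam :=
    hgt.eventually (eventually_gt_nhds (by positivity))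
  have hmem : ∀ᶠ lam in nhdsWithin (0:ℝ) (Set.Ioi 0), lam ∈ Set.Ioi (0:ℝ) :=
    eventually_mem_nhdsWithin
  have hRpos : ∀ᶠ lam in nhdsWithin (0:ℝ) (Set.Ioi 0), 0 < RCoef N γ ρ δ lam := by
    filter_upwards [hgpos, hmem] with lam hgl hl
    have hl : 0 < lam := hl
    have hRval : RCoef N γ ρ δ lam = g lam / lam := by
      rw [eq_div_iff hl.ne', mul_comm]; exact key lam hl
    rw [hRval]; exact div_pos hgl hl
  refine ⟨hRpos, ?_⟩
  -- the limit function
  set F : ℝ → ℝ := fun lam =>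
    δ*(6*n+2)/(4*n^2)
      + (n+1)^2*(Real.sqrt (g lam) - ρ*Real.sqrt lam)/(Real.sqrt γ*(4*n^2)) with hF
  have hsγ : 0 < Real.sqrt γ := Real.sqrt_pos.mpr hγ
  have heq : ∀ᶠ lam in nhdsWithin (0:ℝ) (Set.Ioi 0),
      aCoef N γ ρ δ lam / Real.sqrt (γ * lam) = F lam := by
    filter_upwards [hgpos, hmem] with lam hgl hl
    have hl : 0 < lam := hl
    have hsl : 0 < Real.sqrt lam := Real.sqrt_pos.mpr hl
    have hRval : RCoef N γ ρ δ lam = g lam / lam := by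
      rw [eq_div_iff hl.ne', mul_comm]; exact key lam hl
    have hsR : Real.sqrt (RCoef N γ ρ δ lam) = Real.sqrt (g lam) / Real.sqrt lam := by
      rw [hRval, Real.sqrt_div hgl.le]
    have hsmul : Real.sqrt (γ * lam) = Real.sqrt γ * Real.sqrt lam :=
      Real.sqrt_mul hγ.le lam
    simp only [aCoef, dCoef, hF, ← hn, hsR, hsmul]
    set G := Real.sqrt (g lam) with hG
    set B := Real.sqrt lam with hB
    set A := Real.sqrt γ with hA
    have hB2 : B * B = lam := Real.mul_self_sqrt hl.le
    rw [← hB2]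
    field_simp
    ring
  have hsg : Tendsto (fun lam => Real.sqrt (g lam)) (nhdsWithin (0:ℝ) (Set.Ioi 0))
      (nhds (Real.sqrt (4*γ*X))) := hgt.sqrt
  have hsl0 : Tendsto (fun lam : ℝ => Real.sqrt lam) (nhdsWithin (0:ℝ) (Set.Ioi 0))
      (nhds 0) := by
    have h := Real.continuous_sqrt.tendsto 0
    simpa using h.mono_left nhdsWithin_le_nhds
  have hFt : Tendsto F (nhdsWithin (0:ℝ) (Set.Ioi 0))
      (nhds (δ*(6*n+2)/(4*n^2)
        + (n+1)^2*(Real.sqrt (4*γ*X) - ρ*0)/(Real.sqrt γ*(4*n^2)))) :=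
    tendsto_const_nhds.add
      ((tendsto_const_nhds.mul (hsg.sub (tendsto_const_nhds.mul hsl0))).div_const _)
  have hval : δ*(6*n+2)/(4*n^2)
        + (n+1)^2*(Real.sqrt (4*γ*X) - ρ*0)/(Real.sqrt γ*(4*n^2))
      = Dbar N δ * (n + 1) ^ 2 / (2 * n ^ 2) + (3 * n + 1) * δ / (2 * n ^ 2) := by
    have h4 : Real.sqrt (4*γ*X) = 2 * Real.sqrt γ * Real.sqrt X := by
      rw [show (4:ℝ)*γ*X = (2*Real.sqrt γ)^2 * X by
            rw [mul_pow, Real.sq_sqrt hγ.le]; ring,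
          Real.sqrt_mul (by positivity), Real.sqrt_sq (by positivity)]
    rw [h4, hDbar]
    field_simp
    ring
  rw [← hval]
  exact Tendsto.congr' (heq.mono fun lam h => h.symm) hFt
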